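/- arXiv:2501.15952 — 2 statements merged into one kernel-verified Lean document; each statement's English description precedes it below -/
import Mathlib

section
/- Let G be a graph and S⊆V(G) a set satisfying (H1) and (H2). Let F ∈ cmd_3(G−S) be such that G[F] is complete multipartite with exactly three classes. Then there exists s∈S with F⊆N(s); moreover, there is a strict supergraph of a prison in G that contains s and both endpoints of some edge of G[F]. -/
namespace PrisonFreePaper

variable {V : Type*}

/-- The prison graph on 5 vertices: `K₅` minus the two edges `{4,2}` and `{4,3}`
(which share the vertex `4`).  Thus `{0,1,2,3}` is a 4-clique and the vertex `4`
is adjacent exactly to `0` and `1`. -/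
def prison : SimpleGraph (Fin 5) where
  Adj a b := a ≠ b ∧ ¬((a = 4 ∧ (b = 2 ∨ b = 3)) ∨ (b = 4 ∧ (a = 2 ∨ a = 3)))
  symm := by
    constructor
    rintro a b ⟨h1, h2⟩
    exact ⟨h1.symm, by tauto⟩
  loopless := by
    constructor
    rintro a ⟨h, _⟩
    exact h rfl

/-- `P` is a 5-vertex set inducing a subgraph of `G` isomorphic to the prison. -/
def InducesPrison (G : SimpleGraph V) (P : Set V) : Prop :=
  ∃ f : Fin 5 ↪ V, Set.range f = P ∧ ∀ a b, G.Adj (f a) (f b) ↔ prison.Adj a b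

/-- `G` is prison-free: no 5-vertex set induces a prison. -/
def PrisonFree (G : SimpleGraph V) : Prop :=
  ¬ ∃ P : Set V, InducesPrison G P

/-- `P` is the set of classes witnessing that the induced subgraph `G[F]` is
complete multipartite: the classes are nonempty, pairwise disjoint, their union
is `F`, and two vertices of `F` are adjacent iff they lie in different classes. -/
def IsCMP (G : SimpleGraph V) (F : Set V) (P : Set (Set V)) : Prop :=
  (∀ C ∈ P, C.Nonempty ∧ C ⊆ F) ∧
  (⋃₀ P = F) ∧
  (∀ C ∈ P, ∀ D ∈ P, C ≠ D → Disjoint C D) ∧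
  (∀ u ∈ F, ∀ v ∈ F, (G.Adj u v ↔ ¬ ∃ C ∈ P, u ∈ C ∧ v ∈ C))

/-- The induced subgraph `G[F]` is complete multipartite. -/
def CMP (G : SimpleGraph V) (F : Set V) : Prop := ∃ P, IsCMP G F P

/-- The induced subgraph `G[F]` is complete multipartite with at least `p` classes. -/
def CMPAtLeast (G : SimpleGraph V) (F : Set V) (p : ℕ) : Prop :=
  ∃ P, IsCMP G F P ∧ ∃ f : Fin p ↪ Set V, ∀ i, f i ∈ P

/-- `F ∈ cmd_p` of the induced subgraph of `G` on the ground set `W`: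
`F` is an inclusion-wise maximal subset of `W` inducing a complete multipartite
graph with at least `p` classes. -/
def Cmd (G : SimpleGraph V) (W : Set V) (p : ℕ) (F : Set V) : Prop :=
  F ⊆ W ∧ CMPAtLeast G F p ∧
    ∀ F', F' ⊆ W → F ⊆ F' → CMPAtLeast G F' p → F' = F

/-- The neighbourhood of `v` in `G` intersects at most one class of `P`. -/
def MeetsAtMostOneClass (G : SimpleGraph V) (P : Set (Set V)) (v : V) : Prop :=
  ∀ C ∈ P, ∀ D ∈ P, (∃ x ∈ C, G.Adj v x) → (∃ y ∈ D, G.Adj v y) → C = D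

/-- The induced subgraph `G[X]`, viewed as a graph on the same vertex set
(only edges with both endpoints in `X` are kept). -/
def inducedOn (G : SimpleGraph V) (X : Set V) : SimpleGraph V where
  Adj a b := G.Adj a b ∧ a ∈ X ∧ b ∈ X
  symm := by constructor; rintro a b ⟨h, ha, hb⟩; exact ⟨h.symm, hb, ha⟩
  loopless := by constructor; rintro a ⟨h, _⟩; exact G.loopless.irrefl a h

/-- The set of edges of `G` with both endpoints in `X`, i.e. the edges of `G[X]`. -/
def edgesWithin (G : SimpleGraph V) (X : Set V) : Set (Sym2 V) :=
  (inducedOn G X).edgeSet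

/-- `(G,k)` is a yes-instance of Prison-Free Edge Deletion. -/
def DeletionYes (G : SimpleGraph V) (k : ℕ) : Prop :=
  ∃ A : Set (Sym2 V), A ⊆ G.edgeSet ∧ A.Finite ∧ A.ncard ≤ k ∧
    PrisonFree (G.deleteEdges A)

/-- `P` is a strict supergraph of a prison in `G`: a 5-vertex set whose induced
subgraph is `K₅` or `K₅` minus one edge (at most one non-adjacent pair). -/
def StrictSupPrison (G : SimpleGraph V) (P : Set V) : Prop :=
  P.ncard = 5 ∧ ∃ u v : V, ∀ x ∈ P, ∀ y ∈ P, x ≠ y → ¬ G.Adj x y →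
    (x = u ∧ y = v) ∨ (x = v ∧ y = u)

/-- `P` is a supergraph of a prison in `G`: a 5-vertex set whose induced subgraph
contains a prison on `P` as a spanning subgraph, i.e. all non-adjacent pairs in `P`
are among two pairs sharing a common vertex. -/
def SupPrison (G : SimpleGraph V) (P : Set V) : Prop :=
  P.ncard = 5 ∧ ∃ w u v : V, ∀ x ∈ P, ∀ y ∈ P, x ≠ y → ¬ G.Adj x y →
    (({x, y} : Set V) = {w, u} ∨ ({x, y} : Set V) = {w, v})

/-- Hypothesis (H1): every edge of `G` that does not have both endpoints in `S`
is contained in a strict supergraph of a prison in `G`. -/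
def H1 (G : SimpleGraph V) (S : Set V) : Prop :=
  ∀ u v : V, G.Adj u v → ¬(u ∈ S ∧ v ∈ S) →
    ∃ P, StrictSupPrison G P ∧ u ∈ P ∧ v ∈ P

/-- Hypothesis (H2): every 5-vertex set inducing a prison in `G` contains at least
two edges with both endpoints in `S`. -/
def H2 (G : SimpleGraph V) (S : Set V) : Prop :=
  ∀ P, InducesPrison G P →
    ∃ e₁ e₂ : Sym2 V, e₁ ≠ e₂ ∧ e₁ ∈ edgesWithin G (P ∩ S) ∧ e₂ ∈ edgesWithin G (P ∩ S)

/-- `B`: the edges of `G−S` lying in no triangle of `G−S`. -/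
def BSet (G : SimpleGraph V) (S : Set V) : Set (Sym2 V) :=
  {e ∈ edgesWithin G Sᶜ | ¬ ∃ w ∈ Sᶜ, ∀ x ∈ e, G.Adj w x}

/-- `B_e` for the edge `e = ab` of `G[S]`: the edges of `B` both of whose endpoints
are adjacent in `G` to both `a` and `b`. -/
def BOf (G : SimpleGraph V) (S : Set V) (a b : V) : Set (Sym2 V) :=
  {f ∈ BSet G S | ∀ x ∈ f, G.Adj x a ∧ G.Adj x b}

/-- `V(B_e)`: the set of endpoints of the edges of `B_e`. -/
def BVerts (G : SimpleGraph V) (S : Set V) (a b : V) : Set V :=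
  {x | ∃ f ∈ BOf G S a b, x ∈ f}

/-- The graph `G ∪ A` obtained by adding the pairs in `A` as edges. -/
def addEdges (G : SimpleGraph V) (A : Set (Sym2 V)) : SimpleGraph V :=
  G ⊔ SimpleGraph.fromEdgeSet A

/-- `A` is a prison-free completion set for `G`: a set of non-edges (unordered
pairs of distinct vertices not adjacent in `G`) whose addition makes `G` prison-free. -/
def CompletionSet (G : SimpleGraph V) (A : Set (Sym2 V)) : Prop :=
  (∀ e ∈ A, ¬ e.IsDiag) ∧ (∀ e ∈ A, e ∉ G.edgeSet) ∧ PrisonFree (addEdges G A)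

/-- `A` is a minimal prison-free completion set for `G`. -/
def MinCompletionSet (G : SimpleGraph V) (A : Set (Sym2 V)) : Prop :=
  CompletionSet G A ∧ ∀ A' ⊂ A, ¬ CompletionSet G A'

/-- `A` is a solution to the instance `(G,k)` of Prison-Free Edge Completion:
a prison-free completion set of size at most `k`. -/
def Solution (G : SimpleGraph V) (k : ℕ) (A : Set (Sym2 V)) : Prop :=
  CompletionSet G A ∧ A.Finite ∧ A.ncard ≤ k

/-- `A` is a minimal solution to `(G,k)`: a solution no proper subset of which is a
prison-free completion set. -/
def MinSolution (G : SimpleGraph V) (k : ℕ) (A : Set (Sym2 V)) : Prop :=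
  Solution G k A ∧ ∀ A' ⊂ A, ¬ CompletionSet G A'

/-- `K` is a set of 4 vertices inducing a complete graph `K₄` in `G`. -/
def IsK4 (G : SimpleGraph V) (K : Set V) : Prop :=
  K.ncard = 4 ∧ ∀ u ∈ K, ∀ v ∈ K, u ≠ v → G.Adj u v

/-- The modulator property of the set `S` (output of the sunflower-based
Lemma): for every prison `P` in `G` and every edge set `A ⊆ E(G)` with `|A| ≤ k`,
if deleting `A` from `G[S]` yields a prison-free graph then `A` contains an edge
of `G[P]`. -/
def GoodModulator (G : SimpleGraph V) (k : ℕ) (S : Set V) : Prop :=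
  ∀ P : Set V, InducesPrison G P →
    ∀ A : Set (Sym2 V), A ⊆ G.edgeSet → A.Finite → A.ncard ≤ k →
      PrisonFree ((inducedOn G S).deleteEdges A) →
      ∃ e ∈ A, e ∈ edgesWithin G P

/-- Hypothesis (H3): for every `F' ∈ cmd₃(G−S)` and every inclusion-wise maximal
set `F ⊇ F'` such that `G[F]` is complete multipartite, some vertex outside `F`
has neighbours in at least two classes of `F`. -/
def H3 (G : SimpleGraph V) (S : Set V) : Prop :=
  ∀ F', Cmd G Sᶜ 3 F' → ∀ F : Set V, F' ⊆ F → CMP G F →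
    (∀ F'', F ⊆ F'' → CMP G F'' → F'' = F) →
    ∃ v ∉ F, ∃ P, IsCMP G F P ∧
      ∃ C ∈ P, ∃ D ∈ P, C ≠ D ∧ (∃ x ∈ C, G.Adj v x) ∧ ∃ y ∈ D, G.Adj v y

/-- `F` is an inclusion-wise maximal subset of `W` inducing a complete
multipartite subgraph of `G`. -/
def MaxCMPon (G : SimpleGraph V) (W F : Set V) : Prop :=
  F ⊆ W ∧ CMP G F ∧ ∀ F'', F'' ⊆ W → F ⊆ F'' → CMP G F'' → F'' = F


instance : DecidableRel prison.Adj := fun a b =>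
  decidable_of_iff (a ≠ b ∧ ¬((a = 4 ∧ (b = 2 ∨ b = 3)) ∨ (b = 4 ∧ (a = 2 ∨ a = 3)))) Iff.rfl

lemma edge_eq_of_subset_pair {V : Type*} {G : SimpleGraph V} {T : Set V} {p q : V} {e : Sym2 V}
    (he : e ∈ edgesWithin G T) (hT : T ⊆ {p, q}) : e = s(p, q) := by
  induction e using Sym2.ind with
  | _ x y =>
    have h : (inducedOn G T).Adj x y := (SimpleGraph.mem_edgeSet _).mp he
    obtain ⟨hadj, hx, hy⟩ := h
    have hxy : x ≠ y := hadj.ne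
    have hx' := hT hx
    have hy' := hT hy
    simp only [Set.mem_insert_iff, Set.mem_singleton_iff] at hx' hy'
    rcases hx' with rfl | rfl <;> rcases hy' with rfl | rfl
    · exact absurd rfl hxy
    · rfl
    · exact Sym2.eq_swap
    · exact absurd rfl hxy

lemma h2_contra {V : Type*} {G : SimpleGraph V} {S : Set V} (h2 : H2 G S) {Q : Set V}
    (hQ : InducesPrison G Q) {p q : V} (hsub : Q ∩ S ⊆ {p, q}) : False := by
  obtain ⟨e₁, e₂, hne, hm1, hm2⟩ := h2 Q hQ
  have h1 : e₁ = s(p, q) := edge_eq_of_subset_pair hm1 hsub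
  have h2' : e₂ = s(p, q) := edge_eq_of_subset_pair hm2 hsub
  exact hne (h1.trans h2'.symm)

lemma mk_prison {V : Type*} {G : SimpleGraph V} {a b c d e : V}
    (hab : G.Adj a b) (hac : G.Adj a c) (had : G.Adj a d)
    (hbc : G.Adj b c) (hbd : G.Adj b d) (hcd : G.Adj c d)
    (hea : G.Adj e a) (heb : G.Adj e b)
    (hec : ¬ G.Adj e c) (hed : ¬ G.Adj e d)
    (hec' : e ≠ c) (hed' : e ≠ d) :
    InducesPrison G ({a, b, c, d, e} : Set V) := by
  have nab := hab.ne; have nac := hac.ne; have nad := had.ne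
  have nbc := hbc.ne; have nbd := hbd.ne; have ncd := hcd.ne
  have nea := hea.ne; have neb := heb.ne
  have inj : Function.Injective ![a, b, c, d, e] := by
    intro i j hij
    fin_cases i <;> fin_cases j <;> simp_all
  refine ⟨⟨![a, b, c, d, e], inj⟩, ?_, ?_⟩
  · ext x
    constructor
    · rintro ⟨i, rfl⟩
      fin_cases i <;> simp
    · intro hx
      simp only [Set.mem_insert_iff, Set.mem_singleton_iff] at hx
      rcases hx with rfl | rfl | rfl | rfl | rfl
      exacts [⟨0, rfl⟩, ⟨1, rfl⟩, ⟨2, rfl⟩, ⟨3, rfl⟩, ⟨4, rfl⟩]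
  · intro i j
    fin_cases i <;> fin_cases j <;>
      first
        | exact iff_of_false (G.irrefl) (by decide)
        | exact iff_of_true hab (by decide)
        | exact iff_of_true hab.symm (by decide)
        | exact iff_of_true hac (by decide)
        | exact iff_of_true hac.symm (by decide)
        | exact iff_of_true had (by decide)
        | exact iff_of_true had.symm (by decide)
        | exact iff_of_true hbc (by decide)
        | exact iff_of_true hbc.symm (by decide)
        | exact iff_of_true hbd (by decide)
        | exact iff_of_true hbd.symm (by decide)
        | exact iff_of_true hcd (by decide)
        | exact iff_of_true hcd.symm (by decide)
        | exact iff_of_true hea (by decide)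
        | exact iff_of_true hea.symm (by decide)
        | exact iff_of_true heb (by decide)
        | exact iff_of_true heb.symm (by decide)
        | exact iff_of_false hec (by decide)
        | exact iff_of_false (fun h => hec h.symm) (by decide)
        | exact iff_of_false hed (by decide)
        | exact iff_of_false (fun h => hed h.symm) (by decide)

/-- Under (H1) and (H2), if `F ∈ cmd₃(G−S)` has exactly three
classes, then some `s ∈ S` satisfies `F ⊆ N(s)`; moreover there is a strict
supergraph of a prison in `G` containing `s` and both endpoints of an edge of `G[F]`. -/
theorem tripartite_neighbour {V : Type*} [Fintype V] (G : SimpleGraph V)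
    (S : Set V) (h1 : H1 G S) (h2 : H2 G S)
    (F : Set V) (hF : Cmd G Sᶜ 3 F)
    (hthree : ∃ (P : Set (Set V)) (C₁ C₂ C₃ : Set V), IsCMP G F P ∧
      C₁ ≠ C₂ ∧ C₁ ≠ C₃ ∧ C₂ ≠ C₃ ∧ P = {C₁, C₂, C₃}) :
    ∃ s ∈ S, (∀ x ∈ F, G.Adj s x) ∧
      ∃ P₅ : Set V, StrictSupPrison G P₅ ∧ s ∈ P₅ ∧
        ∃ x y : V, x ∈ F ∧ y ∈ F ∧ G.Adj x y ∧ x ∈ P₅ ∧ y ∈ P₅ := by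
  classical
  obtain ⟨hFsub, -, hmax⟩ := hF
  obtain ⟨P0, C1, C2, C3, hcmp, h12, h13, h23, rfl⟩ := hthree
  obtain ⟨hclasses, hunion, hdisj, hadjiff⟩ := hcmp
  have m1 : C1 ∈ ({C1, C2, C3} : Set (Set V)) := by simp
  have m2 : C2 ∈ ({C1, C2, C3} : Set (Set V)) := by simp
  have m3 : C3 ∈ ({C1, C2, C3} : Set (Set V)) := by simp
  have hC1F : C1 ⊆ F := (hclasses C1 m1).2
  have hC2F : C2 ⊆ F := (hclasses C2 m2).2
  have hC3F : C3 ⊆ F := (hclasses C3 m3).2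
  obtain ⟨u, hu1⟩ := (hclasses C1 m1).1
  obtain ⟨v, hv2⟩ := (hclasses C2 m2).1
  obtain ⟨x3, hx33⟩ := (hclasses C3 m3).1
  have notS : ∀ {x : V}, x ∈ F → x ∉ S := fun hx => hFsub hx
  have classOf : ∀ x ∈ F, x ∈ C1 ∨ x ∈ C2 ∨ x ∈ C3 := by
    intro x hx
    rw [← hunion] at hx
    simpa using hx
  have sameCls : ∀ C ∈ ({C1, C2, C3} : Set (Set V)), ∀ x ∈ C, ∀ y ∈ C, ¬ G.Adj x y := by
    intro C hC x hx y hy hadj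
    exact (hadjiff x ((hclasses C hC).2 hx) y ((hclasses C hC).2 hy)).1 hadj ⟨C, hC, hx, hy⟩
  have memUniq : ∀ C ∈ ({C1, C2, C3} : Set (Set V)), ∀ D ∈ ({C1, C2, C3} : Set (Set V)),
      ∀ x : V, x ∈ C → x ∈ D → C = D := by
    intro C hC D hD x hx hx'
    by_contra h
    exact absurd rfl ((hdisj C hC D hD h).ne_of_mem hx hx')
  have diffAdj : ∀ C ∈ ({C1, C2, C3} : Set (Set V)), ∀ D ∈ ({C1, C2, C3} : Set (Set V)),
      C ≠ D → ∀ x ∈ C, ∀ y ∈ D, G.Adj x y := by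
    intro C hC D hD hCD x hx y hy
    rw [hadjiff x ((hclasses C hC).2 hx) y ((hclasses D hD).2 hy)]
    rintro ⟨E, hE, hxE, hyE⟩
    exact hCD ((memUniq C hC E hE x hx hxE).trans (memUniq D hD E hE y hy hyE).symm)
  have huv : G.Adj u v := diffAdj C1 m1 C2 m2 h12 u hu1 v hv2
  have huF : u ∈ F := hC1F hu1
  have hvF : v ∈ F := hC2F hv2
  have hx3F : x3 ∈ F := hC3F hx33
  obtain ⟨P, hP, huP, hvP⟩ := h1 u v huv (fun h => notS huF h.1)
  obtain ⟨hPcard, u0, v0, hP0⟩ := id hP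
  have hPfin : P.Finite := Set.toFinite P
  have hsubuv : ({u, v} : Set V) ⊆ P := by
    rintro x (rfl | rfl)
    exacts [huP, hvP]
  have hd : (P \ {u, v}).ncard = 3 := by
    rw [Set.ncard_diff hsubuv (Set.toFinite _), hPcard, Set.ncard_pair huv.ne]
  obtain ⟨a, b, c, hab, hac, hbc, habc⟩ := Set.ncard_eq_three.mp hd
  have haD : a ∈ P \ ({u, v} : Set V) := by rw [habc]; simp
  have hbD : b ∈ P \ ({u, v} : Set V) := by rw [habc]; simp
  have hcD : c ∈ P \ ({u, v} : Set V) := by rw [habc]; simp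
  have hau : a ≠ u := fun h => haD.2 (by rw [h]; simp)
  have hav : a ≠ v := fun h => haD.2 (by rw [h]; simp)
  have hbu : b ≠ u := fun h => hbD.2 (by rw [h]; simp)
  have hbv : b ≠ v := fun h => hbD.2 (by rw [h]; simp)
  have hcu : c ≠ u := fun h => hcD.2 (by rw [h]; simp)
  have hcv : c ≠ v := fun h => hcD.2 (by rw [h]; simp)
  have key : ∀ x y : V, x ∈ P → y ∈ P → x ≠ y →
      (x ∉ ({u0, v0} : Set V) ∨ y ∉ ({u0, v0} : Set V)) → G.Adj x y := by
    intro x y hx hy hxy hout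
    by_contra hn
    rcases hP0 x hx y hy hxy hn with ⟨rfl, rfl⟩ | ⟨rfl, rfl⟩
    · rcases hout with h | h
      · exact h (by simp)
      · exact h (by simp)
    · rcases hout with h | h
      · exact h (by simp)
      · exact h (by simp)
  have pairM : ∀ x y : V, x ∈ ({u0, v0} : Set V) → y ∈ ({u0, v0} : Set V) → x ≠ y →
      x ≠ u → y ≠ u → x ≠ v → y ≠ v →
      u ∉ ({u0, v0} : Set V) ∧ v ∉ ({u0, v0} : Set V) := by
    intro x y hx hy hxy hxu hyu hxv hyv
    simp only [Set.mem_insert_iff, Set.mem_singleton_iff] at hx hy ⊢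
    rcases hx with rfl | rfl <;> rcases hy with rfl | rfl
    · exact absurd rfl hxy
    · exact ⟨fun h => h.elim (fun h' => hxu h'.symm) (fun h' => hyu h'.symm),
        fun h => h.elim (fun h' => hxv h'.symm) (fun h' => hyv h'.symm)⟩
    · exact ⟨fun h => h.elim (fun h' => hyu h'.symm) (fun h' => hxu h'.symm),
        fun h => h.elim (fun h' => hyv h'.symm) (fun h' => hxv h'.symm)⟩
    · exact absurd rfl hxy
  have sel : ∃ z z', z ∈ P ∧ z' ∈ P ∧
      G.Adj u z ∧ G.Adj u z' ∧ G.Adj v z ∧ G.Adj v z' ∧ G.Adj z z' := by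
    have mk : ∀ z z', z ∈ P \ ({u, v} : Set V) → z' ∈ P \ ({u, v} : Set V) → z ≠ z' →
        (u ∉ ({u0, v0} : Set V) ∨ z ∉ ({u0, v0} : Set V)) →
        (u ∉ ({u0, v0} : Set V) ∨ z' ∉ ({u0, v0} : Set V)) →
        (v ∉ ({u0, v0} : Set V) ∨ z ∉ ({u0, v0} : Set V)) →
        (v ∉ ({u0, v0} : Set V) ∨ z' ∉ ({u0, v0} : Set V)) →
        (z ∉ ({u0, v0} : Set V) ∨ z' ∉ ({u0, v0} : Set V)) →
        ∃ z z', z ∈ P ∧ z' ∈ P ∧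
          G.Adj u z ∧ G.Adj u z' ∧ G.Adj v z ∧ G.Adj v z' ∧ G.Adj z z' := by
      intro z z' hz hz' hne d1 d2 d3 d4 d5
      obtain ⟨hzP, hzuv⟩ := hz
      obtain ⟨hz'P, hz'uv⟩ := hz'
      have hzu : u ≠ z := fun h => hzuv (by rw [← h]; simp)
      have hzv : v ≠ z := fun h => hzuv (by rw [← h]; simp)
      have hz'u : u ≠ z' := fun h => hz'uv (by rw [← h]; simp)
      have hz'v : v ≠ z' := fun h => hz'uv (by rw [← h]; simp)
      exact ⟨z, z', hzP, hz'P, key u z huP hzP hzu d1, key u z' huP hz'P hz'u d2,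
        key v z hvP hzP hzv d3, key v z' hvP hz'P hz'v d4, key z z' hzP hz'P hne d5⟩
    by_cases haM : a ∈ ({u0, v0} : Set V) <;> by_cases hbM : b ∈ ({u0, v0} : Set V) <;>
      by_cases hcM : c ∈ ({u0, v0} : Set V)
    · exfalso
      simp only [Set.mem_insert_iff, Set.mem_singleton_iff] at haM hbM hcM
      rcases haM with rfl | rfl <;> rcases hbM with rfl | rfl <;> rcases hcM with rfl | rfl <;>
        first
          | exact hab rfl
          | exact hac rfl
          | exact hbc rfl
    · obtain ⟨hu', hv'⟩ := pairM a b haM hbM hab hau hbu hav hbv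
      exact mk a c haD hcD hac (Or.inl hu') (Or.inr hcM) (Or.inl hv') (Or.inr hcM) (Or.inr hcM)
    · obtain ⟨hu', hv'⟩ := pairM a c haM hcM hac hau hcu hav hcv
      exact mk a b haD hbD hab (Or.inl hu') (Or.inr hbM) (Or.inl hv') (Or.inr hbM) (Or.inr hbM)
    · exact mk b c hbD hcD hbc (Or.inr hbM) (Or.inr hcM) (Or.inr hbM) (Or.inr hcM) (Or.inl hbM)
    · obtain ⟨hu', hv'⟩ := pairM b c hbM hcM hbc hbu hcu hbv hcv
      exact mk a b haD hbD hab (Or.inr haM) (Or.inl hu') (Or.inr haM) (Or.inl hv') (Or.inl haM)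
    · exact mk a c haD hcD hac (Or.inr haM) (Or.inr hcM) (Or.inr haM) (Or.inr hcM) (Or.inl haM)
    · exact mk a b haD hbD hab (Or.inr haM) (Or.inr hbM) (Or.inr haM) (Or.inr hbM) (Or.inl haM)
    · exact mk a b haD hbD hab (Or.inr haM) (Or.inr hbM) (Or.inr haM) (Or.inr hbM) (Or.inl haM)
  obtain ⟨z, z', hzP, hz'P, hadj_uz, hadj_uz', hadj_vz, hadj_vz', hadj_zz'⟩ := sel
  -- Claim A
  have claimA : ∀ w, w ∈ F → G.Adj w u → G.Adj w v → w ≠ z → w ≠ z' →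
      (G.Adj w z ∨ G.Adj w z') := by
    intro w hwF hwu hwv hwz hwz'
    by_contra hn
    push_neg at hn
    refine h2_contra h2
      (mk_prison huv hadj_uz hadj_uz' hadj_vz hadj_vz' hadj_zz' hwu hwv hn.1 hn.2 hwz hwz')
      (p := z) (q := z') ?_
    rintro x ⟨hx, hxS⟩
    simp only [Set.mem_insert_iff, Set.mem_singleton_iff] at hx
    rcases hx with rfl | rfl | rfl | rfl | rfl
    · exact absurd hxS (notS huF)
    · exact absurd hxS (notS hvF)
    · exact Set.mem_insert _ _
    · exact Set.mem_insert_of_mem _ rfl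
    · exact absurd hxS (notS hwF)
  have clsOf : ∀ t : V, G.Adj u t → G.Adj v t → t ∈ F → t ∈ C3 := by
    intro t hut hvt htF
    rcases classOf t htF with h | h | h
    · exact absurd hut (sameCls C1 m1 u hu1 t h)
    · exact absurd hvt (sameCls C2 m2 v hv2 t h)
    · exact h
  -- Claim B': a common neighbour of C3 among {z, z'} lying outside F
  have claimB : ∃ s, (s = z ∨ s = z') ∧ s ∉ F ∧ ∀ w ∈ C3, G.Adj w s := by
    by_cases hzF : z ∈ F
    · have hz3 : z ∈ C3 := clsOf z hadj_uz hadj_vz hzF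
      have hz'F : z' ∉ F := fun h =>
        sameCls C3 m3 z hz3 z' (clsOf z' hadj_uz' hadj_vz' h) hadj_zz'
      refine ⟨z', Or.inr rfl, hz'F, ?_⟩
      intro w hw
      by_cases hwz : w = z
      · rw [hwz]; exact hadj_zz'
      · have hnwz : ¬ G.Adj w z := sameCls C3 m3 w hw z hz3
        have hwz' : w ≠ z' := fun h => hz'F (h ▸ hC3F hw)
        rcases claimA w (hC3F hw) (diffAdj C3 m3 C1 m1 (Ne.symm h13) w hw u hu1)
          (diffAdj C3 m3 C2 m2 (Ne.symm h23) w hw v hv2) hwz hwz' with h | h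
        · exact absurd h hnwz
        · exact h
    · by_cases hz'F : z' ∈ F
      · have hz'3 : z' ∈ C3 := clsOf z' hadj_uz' hadj_vz' hz'F
        refine ⟨z, Or.inl rfl, hzF, ?_⟩
        intro w hw
        by_cases hwz' : w = z'
        · rw [hwz']; exact hadj_zz'.symm
        · have hnwz' : ¬ G.Adj w z' := sameCls C3 m3 w hw z' hz'3
          have hwz : w ≠ z := fun h => hzF (h ▸ hC3F hw)
          rcases claimA w (hC3F hw) (diffAdj C3 m3 C1 m1 (Ne.symm h13) w hw u hu1)
            (diffAdj C3 m3 C2 m2 (Ne.symm h23) w hw v hv2) hwz hwz' with h | h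
          · exact h
          · exact absurd h hnwz'
      · by_cases hAz : ∀ w ∈ C3, G.Adj w z
        · exact ⟨z, Or.inl rfl, hzF, hAz⟩
        · refine ⟨z', Or.inr rfl, hz'F, ?_⟩
          push_neg at hAz
          obtain ⟨w, hw, hnwz⟩ := hAz
          intro w' hw'
          by_contra hnw'z'
          have hwzne : w ≠ z := fun h => hzF (h ▸ hC3F hw)
          have hwz'ne : w ≠ z' := fun h => hz'F (h ▸ hC3F hw)
          have hw'zne : w' ≠ z := fun h => hzF (h ▸ hC3F hw')
          have hw'z'ne : w' ≠ z' := fun h => hz'F (h ▸ hC3F hw')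
          have hwz' : G.Adj w z' := by
            rcases claimA w (hC3F hw) (diffAdj C3 m3 C1 m1 (Ne.symm h13) w hw u hu1)
              (diffAdj C3 m3 C2 m2 (Ne.symm h23) w hw v hv2) hwzne hwz'ne with h | h
            · exact absurd h hnwz
            · exact h
          have hw'z : G.Adj w' z := by
            rcases claimA w' (hC3F hw') (diffAdj C3 m3 C1 m1 (Ne.symm h13) w' hw' u hu1)
              (diffAdj C3 m3 C2 m2 (Ne.symm h23) w' hw' v hv2) hw'zne hw'z'ne with h | h
            · exact h
            · exact absurd h hnw'z'
          have hww' : w ≠ w' := fun h => hnwz (by rw [h]; exact hw'z)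
          have hnww' : ¬ G.Adj w w' := sameCls C3 m3 w hw w' hw'
          refine h2_contra h2
            (mk_prison huv hadj_uz (diffAdj C1 m1 C3 m3 h13 u hu1 w' hw') hadj_vz
              (diffAdj C2 m2 C3 m3 h23 v hv2 w' hw') hw'z.symm
              (diffAdj C3 m3 C1 m1 (Ne.symm h13) w hw u hu1)
              (diffAdj C3 m3 C2 m2 (Ne.symm h23) w hw v hv2) hnwz hnww' hwzne hww')
            (p := z) (q := z) ?_
          rintro x ⟨hx, hxS⟩
          simp only [Set.mem_insert_iff, Set.mem_singleton_iff] at hx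
          rcases hx with rfl | rfl | rfl | rfl | rfl
          · exact absurd hxS (notS huF)
          · exact absurd hxS (notS hvF)
          · exact Set.mem_insert _ _
          · exact absurd hxS (notS (hC3F hw'))
          · exact absurd hxS (notS (hC3F hw))
  obtain ⟨s, hsz, hsF, hsc3⟩ := claimB
  have hus : G.Adj u s := by rcases hsz with rfl | rfl; exacts [hadj_uz, hadj_uz']
  have hvs : G.Adj v s := by rcases hsz with rfl | rfl; exacts [hadj_vz, hadj_vz']
  have hsP : s ∈ P := by rcases hsz with rfl | rfl; exacts [hzP, hz'P]
  have hx3s : G.Adj x3 s := hsc3 x3 hx33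
  -- s is adjacent to all of F
  have sAll : ∀ x ∈ F, G.Adj s x := by
    intro x hx
    rcases classOf x hx with h1' | h2' | h3'
    · by_cases hxu : x = u
      · rw [hxu]; exact hus.symm
      · by_contra hnsx
        have hnxu : ¬ G.Adj x u := sameCls C1 m1 x h1' u hu1
        have hnxs : ¬ G.Adj x s := fun h => hnsx h.symm
        refine h2_contra h2
          (mk_prison (diffAdj C2 m2 C3 m3 h23 v hv2 x3 hx33) huv.symm hvs
            (diffAdj C3 m3 C1 m1 (Ne.symm h13) x3 hx33 u hu1) hx3s hus
            (diffAdj C1 m1 C2 m2 h12 x h1' v hv2)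
            (diffAdj C1 m1 C3 m3 h13 x h1' x3 hx33) hnxu hnxs hxu
            (fun h => hsF (h ▸ hx)))
          (p := s) (q := s) ?_
        rintro y ⟨hy, hyS⟩
        simp only [Set.mem_insert_iff, Set.mem_singleton_iff] at hy
        rcases hy with rfl | rfl | rfl | rfl | rfl
        · exact absurd hyS (notS hvF)
        · exact absurd hyS (notS hx3F)
        · exact absurd hyS (notS huF)
        · exact Set.mem_insert _ _
        · exact absurd hyS (notS hx)
    · by_cases hxv : x = v
      · rw [hxv]; exact hvs.symm
      · by_contra hnsx
        have hnxv : ¬ G.Adj x v := sameCls C2 m2 x h2' v hv2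
        have hnxs : ¬ G.Adj x s := fun h => hnsx h.symm
        refine h2_contra h2
          (mk_prison (diffAdj C1 m1 C3 m3 h13 u hu1 x3 hx33) huv hus
            (diffAdj C3 m3 C2 m2 (Ne.symm h23) x3 hx33 v hv2) hx3s hvs
            (diffAdj C2 m2 C1 m1 (Ne.symm h12) x h2' u hu1)
            (diffAdj C2 m2 C3 m3 h23 x h2' x3 hx33) hnxv hnxs hxv
            (fun h => hsF (h ▸ hx)))
          (p := s) (q := s) ?_
        rintro y ⟨hy, hyS⟩
        simp only [Set.mem_insert_iff, Set.mem_singleton_iff] at hy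
        rcases hy with rfl | rfl | rfl | rfl | rfl
        · exact absurd hyS (notS huF)
        · exact absurd hyS (notS hx3F)
        · exact absurd hyS (notS hvF)
        · exact Set.mem_insert _ _
        · exact absurd hyS (notS hx)
    · exact (hsc3 x h3').symm
  -- s must lie in S, by maximality of F
  have hsS : s ∈ S := by
    by_contra hsS
    have hins : insert s F ⊆ Sᶜ := by
      intro x hx
      rcases Set.mem_insert_iff.mp hx with rfl | hx'
      · exact hsS
      · exact hFsub hx'
    have hcm : CMPAtLeast G (insert s F) 3 := by
      refine ⟨insert {s} {C1, C2, C3}, ⟨?_, ?_, ?_, ?_⟩, ⟨![C1, C2, C3], ?_⟩, ?_⟩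
      · intro C hC
        simp only [Set.mem_insert_iff, Set.mem_singleton_iff] at hC
        rcases hC with hC | hC | hC | hC <;> rw [hC]
        · exact ⟨⟨s, rfl⟩, by simp⟩
        · exact ⟨(hclasses C1 m1).1, hC1F.trans (Set.subset_insert _ _)⟩
        · exact ⟨(hclasses C2 m2).1, hC2F.trans (Set.subset_insert _ _)⟩
        · exact ⟨(hclasses C3 m3).1, hC3F.trans (Set.subset_insert _ _)⟩
      · rw [Set.sUnion_insert, hunion, Set.singleton_union]
      · have hdisjS : ∀ E ∈ ({C1, C2, C3} : Set (Set V)), Disjoint ({s} : Set V) E := by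
          intro E hE
          refine Set.disjoint_left.mpr ?_
          rintro x rfl hx
          exact hsF ((hclasses E hE).2 hx)
        intro C hC D hD hCD
        simp only [Set.mem_insert_iff, Set.mem_singleton_iff] at hC hD
        rcases hC with hC | hC | hC | hC <;> rcases hD with hD | hD | hD | hD <;>
          rw [hC, hD] at hCD ⊢ <;>
          first
            | exact absurd rfl hCD
            | exact hdisjS _ (by simp)
            | exact (hdisjS _ (by simp)).symm
            | exact hdisj _ (by simp) _ (by simp) hCD
      · intro x hx y hy
        rcases Set.mem_insert_iff.mp hx with hxs | hxF
        · rcases Set.mem_insert_iff.mp hy with hys | hyF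
          · rw [hxs, hys]
            exact iff_of_false (G.irrefl)
              (fun hn => hn ⟨({s} : Set V), Set.mem_insert _ _,
                Set.mem_singleton_iff.mpr rfl, Set.mem_singleton_iff.mpr rfl⟩)
          · rw [hxs]
            refine iff_of_true (sAll y hyF) ?_
            rintro ⟨C, hC, hsC, hyC⟩
            simp only [Set.mem_insert_iff, Set.mem_singleton_iff] at hC
            rcases hC with hC | hC | hC | hC <;> rw [hC] at hsC hyC
            · exact hsF ((Set.mem_singleton_iff.mp hyC) ▸ hyF)
            · exact hsF (hC1F hsC)
            · exact hsF (hC2F hsC)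
            · exact hsF (hC3F hsC)
        · rcases Set.mem_insert_iff.mp hy with hys | hyF
          · rw [hys]
            refine iff_of_true ((sAll x hxF).symm) ?_
            rintro ⟨C, hC, hxC, hsC⟩
            simp only [Set.mem_insert_iff, Set.mem_singleton_iff] at hC
            rcases hC with hC | hC | hC | hC <;> rw [hC] at hxC hsC
            · exact hsF ((Set.mem_singleton_iff.mp hxC) ▸ hxF)
            · exact hsF (hC1F hsC)
            · exact hsF (hC2F hsC)
            · exact hsF (hC3F hsC)
          · rw [hadjiff x hxF y hyF]
            constructor
            · intro h hn
              apply h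
              obtain ⟨C, hC, hx', hy'⟩ := hn
              rcases Set.mem_insert_iff.mp hC with rfl | hC'
              · exact absurd ((Set.mem_singleton_iff.mp hx') ▸ hxF) hsF
              · exact ⟨C, hC', hx', hy'⟩
            · intro h hn
              apply h
              obtain ⟨C, hC, hx', hy'⟩ := hn
              exact ⟨C, Set.mem_insert_of_mem _ hC, hx', hy'⟩
      · intro i j hij
        fin_cases i <;> fin_cases j <;>
          simp only [Matrix.cons_val_zero, Matrix.cons_val_one, Matrix.head_cons,
            Matrix.cons_val_two, Matrix.tail_cons, Matrix.head_fin_const] at hij ⊢ <;>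
          first
            | rfl
            | exact absurd hij h12
            | exact absurd hij h13
            | exact absurd hij h23
            | exact absurd hij.symm h12
            | exact absurd hij.symm h13
            | exact absurd hij.symm h23
      · intro i
        change ![C1, C2, C3] i ∈ (insert {s} {C1, C2, C3} : Set (Set V))
        fin_cases i <;> simp
    have heq : insert s F = F := hmax (insert s F) hins (Set.subset_insert _ _) hcm
    exact hsF (heq ▸ Set.mem_insert s F)
  exact ⟨s, hsS, sAll, P, hP, hsP, u, v, huF, hvF, huv, huP, hvP⟩

end PrisonFreePaper
end

section
/- Let G be a graph and S⊆V(G) a set satisfying (H1) and (H2). Then the nonempty sets among {B_e : e∈E(G[S])} form a partition of B; that is, every edge of B lies in B_e for some edge e of G[S], and for any two edges e1,e2 of G[S], the sets B_{e1} and B_{e2} are either equal or disjoint. -/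
namespace PrisonFreePaper

variable {V : Type*}

section Statement13Aux

variable {G : SimpleGraph V} {S : Set V}

lemma mem_edgesWithin {X : Set V} {x y : V} :
    s(x,y) ∈ edgesWithin G X ↔ G.Adj x y ∧ x ∈ X ∧ y ∈ X := by
  simp [edgesWithin, inducedOn, SimpleGraph.mem_edgeSet]

lemma build_prison (v0 v1 v2 v3 v4 : V)
    (h01 : G.Adj v0 v1) (h02 : G.Adj v0 v2) (h03 : G.Adj v0 v3) (h04 : G.Adj v0 v4)
    (h12 : G.Adj v1 v2) (h13 : G.Adj v1 v3) (h14 : G.Adj v1 v4)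
    (h23 : G.Adj v2 v3) (n24 : ¬G.Adj v2 v4) (n34 : ¬G.Adj v3 v4)
    (ne24 : v2 ≠ v4) (ne34 : v3 ≠ v4) :
    InducesPrison G {v0, v1, v2, v3, v4} := by
  have ne01 := h01.ne; have ne02 := h02.ne; have ne03 := h03.ne; have ne04 := h04.ne
  have ne12 := h12.ne; have ne13 := h13.ne; have ne14 := h14.ne; have ne23 := h23.ne
  have hinj : Function.Injective ![v0, v1, v2, v3, v4] := by
    intro i j h
    fin_cases i <;> fin_cases j <;> simp_all
  refine ⟨⟨![v0, v1, v2, v3, v4], hinj⟩, ?_, ?_⟩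
  · ext x
    constructor
    · rintro ⟨i, rfl⟩; simp only [Function.Embedding.coeFn_mk]; fin_cases i <;> simp
    · rintro (rfl | rfl | rfl | rfl | rfl)
      exacts [⟨0, rfl⟩, ⟨1, rfl⟩, ⟨2, rfl⟩, ⟨3, rfl⟩, ⟨4, rfl⟩]
  · intro a b
    have n42 : ¬G.Adj v4 v2 := fun h => n24 h.symm
    have n43 : ¬G.Adj v4 v3 := fun h => n34 h.symm
    simp only [Function.Embedding.coeFn_mk]
    fin_cases a <;> fin_cases b <;>
      simp [prison, G.irrefl, h01, h02, h03, h04, h12, h13, h14, h23,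
        h01.symm, h02.symm, h03.symm, h04.symm, h12.symm, h13.symm, h14.symm, h23.symm,
        n24, n34, n42, n43]

lemma not_prison_of_subsingleton (h2 : H2 G S) {P : Set V} (hP : InducesPrison G P)
    {c d : V} (hsub : ∀ x ∈ P ∩ S, ∀ y ∈ P ∩ S, G.Adj x y → s(x,y) = s(c,d)) : False := by
  obtain ⟨e1, e2, hne, he1, he2⟩ := h2 P hP
  have key : ∀ e ∈ edgesWithin G (P ∩ S), e = s(c,d) := by
    intro e he
    induction e using Sym2.ind with
    | _ x y =>
      rw [mem_edgesWithin] at he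
      exact hsub x he.2.1 y he.2.2 he.1
  exact hne ((key e1 he1).trans (key e2 he2).symm)

/-- Prison `{a,b,u,v,u'}` : `K₄` on `{a,b,u,v}` plus `u'` adjacent exactly to `a,b`.
Only `S`-edge can be `ab`, contradicting (H2). -/
lemma contra1 (h2 : H2 G S) {u v a b u' : V}
    (huS : u ∉ S) (hvS : v ∉ S) (hu'S : u' ∉ S)
    (hab : G.Adj a b) (hau : G.Adj a u) (hav : G.Adj a v) (hau' : G.Adj a u')
    (hbu : G.Adj b u) (hbv : G.Adj b v) (hbu' : G.Adj b u')
    (huv : G.Adj u v) (nuu' : ¬G.Adj u u') (nvu' : ¬G.Adj v u')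
    (neuu' : u ≠ u') (nevu' : v ≠ u') : False := by
  refine not_prison_of_subsingleton h2
    (build_prison a b u v u' hab hau hav hau' hbu hbv hbu' huv nuu' nvu' neuu' nevu')
    (c := a) (d := b) ?_
  rintro x ⟨hx, hxS⟩ y ⟨hy, hyS⟩ hxy
  simp only [Set.mem_insert_iff, Set.mem_singleton_iff] at hx hy
  rcases hx with rfl | rfl | rfl | rfl | rfl <;>
    rcases hy with rfl | rfl | rfl | rfl | rfl <;>
      first
        | rfl
        | exact Sym2.eq_swap
        | exact absurd rfl hxy.ne
        | exact absurd hxS huS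
        | exact absurd hxS hvS
        | exact absurd hxS hu'S
        | exact absurd hyS huS
        | exact absurd hyS hvS
        | exact absurd hyS hu'S

/-- Prison `{u,v,a,b,a'}` : `K₄` on `{u,v,a,b}` plus `a'` adjacent exactly to `u,v`.
Only `S`-edge can be `ab`, contradicting (H2). -/
lemma contra2 (h2 : H2 G S) {u v a b a' : V}
    (huS : u ∉ S) (hvS : v ∉ S)
    (huv : G.Adj u v) (hua : G.Adj u a) (hub : G.Adj u b) (hua' : G.Adj u a')
    (hva : G.Adj v a) (hvb : G.Adj v b) (hva' : G.Adj v a')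
    (hab : G.Adj a b) (naa' : ¬G.Adj a a') (nba' : ¬G.Adj b a')
    (neaa' : a ≠ a') (neba' : b ≠ a') : False := by
  refine not_prison_of_subsingleton h2
    (build_prison u v a b a' huv hua hub hua' hva hvb hva' hab naa' nba' neaa' neba')
    (c := a) (d := b) ?_
  rintro x ⟨hx, hxS⟩ y ⟨hy, hyS⟩ hxy
  simp only [Set.mem_insert_iff, Set.mem_singleton_iff] at hx hy
  rcases hx with rfl | rfl | rfl | rfl | rfl <;>
    rcases hy with rfl | rfl | rfl | rfl | rfl <;>
      first
        | rfl
        | exact Sym2.eq_swap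
        | exact absurd rfl hxy.ne
        | exact absurd hxS huS
        | exact absurd hxS hvS
        | exact absurd hyS huS
        | exact absurd hyS hvS
        | exact absurd hxy naa'
        | exact absurd hxy nba'
        | exact absurd hxy.symm naa'
        | exact absurd hxy.symm nba'

/-- Prison `{u,a,v,a',u'}` : `K₄` on `{u,a,v,a'}` plus `u'` adjacent exactly to `u,a`.
Only `S`-edge can be `aa'`, contradicting (H2). -/
lemma contra3 (h2 : H2 G S) {u a v a' u' : V}
    (huS : u ∉ S) (hvS : v ∉ S) (hu'S : u' ∉ S)
    (hua : G.Adj u a) (huv : G.Adj u v) (hua' : G.Adj u a') (huu' : G.Adj u u')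
    (hav : G.Adj a v) (haa' : G.Adj a a') (hau' : G.Adj a u')
    (hva' : G.Adj v a') (nvu' : ¬G.Adj v u') (na'u' : ¬G.Adj a' u')
    (nevu' : v ≠ u') (nea'u' : a' ≠ u') : False := by
  refine not_prison_of_subsingleton h2
    (build_prison u a v a' u' hua huv hua' huu' hav haa' hau' hva' nvu' na'u' nevu' nea'u')
    (c := a) (d := a') ?_
  rintro x ⟨hx, hxS⟩ y ⟨hy, hyS⟩ hxy
  simp only [Set.mem_insert_iff, Set.mem_singleton_iff] at hx hy
  rcases hx with rfl | rfl | rfl | rfl | rfl <;>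
    rcases hy with rfl | rfl | rfl | rfl | rfl <;>
      first
        | rfl
        | exact Sym2.eq_swap
        | exact absurd rfl hxy.ne
        | exact absurd hxS huS
        | exact absurd hxS hvS
        | exact absurd hxS hu'S
        | exact absurd hyS huS
        | exact absurd hyS hvS
        | exact absurd hyS hu'S

/-- Key step: if `uv ∈ B_{ab} ∩ B_{a'b'}` and `u' ∈ Sᶜ` is adjacent to both `a`
and `b`, then `u'` is adjacent to `a'`. -/
lemma adj_key (h2 : H2 G S) {u v a b a' u' : V}
    (huS : u ∉ S) (hvS : v ∉ S) (hu'S : u' ∉ S) (ha'S : a' ∈ S)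
    (huv : G.Adj u v)
    (hnc : ¬ ∃ w, w ∉ S ∧ G.Adj w u ∧ G.Adj w v)
    (hab : G.Adj a b)
    (hua : G.Adj u a) (hub : G.Adj u b) (hva : G.Adj v a) (hvb : G.Adj v b)
    (hua' : G.Adj u a') (hva' : G.Adj v a')
    (hu'a : G.Adj u' a) (hu'b : G.Adj u' b) :
    G.Adj u' a' := by
  by_cases e1 : a' = a
  · exact e1 ▸ hu'a
  by_cases e2 : a' = b
  · exact e2 ▸ hu'b
  by_cases e3 : u' = u
  · exact e3 ▸ hua'
  by_cases e4 : u' = v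
  · exact e4 ▸ hva'
  by_contra hcon
  have hne1 : u ≠ u' := fun h => e3 h.symm
  have hne2 : v ≠ u' := fun h => e4 h.symm
  have hne3 : a ≠ a' := fun h => e1 h.symm
  have hne4 : b ≠ a' := fun h => e2 h.symm
  have hnea'u' : a' ≠ u' := fun h => hu'S (h ▸ ha'S)
  have step1 : G.Adj u' u ∨ G.Adj u' v := by
    by_contra hns
    push_neg at hns
    exact contra1 h2 huS hvS hu'S hab hua.symm hva.symm hu'a.symm hub.symm hvb.symm
      hu'b.symm huv (fun h => hns.1 h.symm) (fun h => hns.2 h.symm) hne1 hne2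
  have step2 : G.Adj a' a ∨ G.Adj a' b := by
    by_contra hns
    push_neg at hns
    exact contra2 h2 huS hvS huv hua hub hua' hva hvb hva' hab
      (fun h => hns.1 h.symm) (fun h => hns.2 h.symm) hne3 hne4
  have hnboth : ¬(G.Adj u' u ∧ G.Adj u' v) := fun ⟨p, q⟩ => hnc ⟨u', hu'S, p, q⟩
  have ncon : ¬G.Adj a' u' := fun h => hcon h.symm
  rcases step1 with s1 | s1
  · have nv : ¬G.Adj v u' := fun h => hnboth ⟨s1, h.symm⟩
    rcases step2 with s2 | s2
    · exact contra3 h2 huS hvS hu'S hua huv hua' s1.symm hva.symm s2.symm hu'a.symm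
        hva' nv ncon hne2 hnea'u'
    · exact contra3 h2 huS hvS hu'S hub huv hua' s1.symm hvb.symm s2.symm hu'b.symm
        hva' nv ncon hne2 hnea'u'
  · have nu : ¬G.Adj u u' := fun h => hnboth ⟨h.symm, s1⟩
    rcases step2 with s2 | s2
    · exact contra3 h2 hvS huS hu'S hva huv.symm hva' s1.symm hua.symm s2.symm hu'a.symm
        hua' nu ncon hne1 hnea'u'
    · exact contra3 h2 hvS huS hu'S hvb huv.symm hva' s1.symm hub.symm s2.symm hu'b.symm
        hua' nu ncon hne1 hnea'u'

lemma no_common (hno : ¬ ∃ w ∈ Sᶜ, ∀ x ∈ s(u,v), G.Adj w x) :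
    ¬ ∃ w, w ∉ S ∧ G.Adj w u ∧ G.Adj w v := by
  rintro ⟨w, hwS, p, q⟩
  exact hno ⟨w, hwS, fun x hx => by
    rcases Sym2.mem_iff.mp hx with rfl | rfl
    exacts [p, q]⟩

/-- Claim 1: every edge of `B` lies in some `B_e`. -/
lemma claim1 [Fintype V] (h1 : H1 G S) (h2 : H2 G S) {u v : V}
    (hf : s(u,v) ∈ BSet G S) :
    ∃ a b : V, a ∈ S ∧ b ∈ S ∧ G.Adj a b ∧ s(u,v) ∈ BOf G S a b := by
  obtain ⟨hew, hno⟩ := hf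
  rw [mem_edgesWithin] at hew
  obtain ⟨huv, huSc, hvSc⟩ := hew
  have huS : u ∉ S := huSc
  have hvS : v ∉ S := hvSc
  have hnc := no_common (u := u) (v := v) hno
  obtain ⟨P, ⟨hP5, p, q, hmiss⟩, huP, hvP⟩ :=
    h1 u v huv (fun h => huS h.1)
  have hsub : ({u, v} : Set V) ⊆ P := by
    rintro x (rfl | rfl); exacts [huP, hvP]
  have hcard : (P \ {u, v}).ncard = 3 := by
    rw [Set.ncard_diff hsub, Set.ncard_pair huv.ne, hP5]
  obtain ⟨x, y, z, hxy, hxz, hyz, hXYZ⟩ := Set.ncard_eq_three.mp hcard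
  have hxm : x ∈ P \ {u, v} := hXYZ ▸ (by simp)
  have hym : y ∈ P \ {u, v} := hXYZ ▸ (by simp)
  have hzm : z ∈ P \ {u, v} := hXYZ ▸ (by simp)
  obtain ⟨hxP, hxuv⟩ := hxm
  obtain ⟨hyP, hyuv⟩ := hym
  obtain ⟨hzP, hzuv⟩ := hzm
  simp only [Set.mem_insert_iff, Set.mem_singleton_iff, not_or] at hxuv hyuv hzuv
  -- "Bad w" : the missing pair of the strict supergraph joins w to u or v
  set Bad : V → Prop := fun w => (w = p ∧ (u = q ∨ v = q)) ∨ (w = q ∧ (u = p ∨ v = p))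
    with hBad
  have good : ∀ w, w ∈ P → w ≠ u → w ≠ v → ¬ Bad w →
      w ∈ S ∧ G.Adj u w ∧ G.Adj v w := by
    intro w hwP hwu hwv hnb
    have hwadju : G.Adj w u := by
      by_contra hn
      exact hnb (by
        rcases hmiss w hwP u huP hwu hn with ⟨h1', h2'⟩ | ⟨h1', h2'⟩
        · exact Or.inl ⟨h1', Or.inl h2'⟩
        · exact Or.inr ⟨h1', Or.inl h2'⟩)
    have hwadjv : G.Adj w v := by
      by_contra hn
      exact hnb (by
        rcases hmiss w hwP v hvP hwv hn with ⟨h1', h2'⟩ | ⟨h1', h2'⟩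
        · exact Or.inl ⟨h1', Or.inr h2'⟩
        · exact Or.inr ⟨h1', Or.inr h2'⟩)
    have hwS : w ∈ S := by
      by_contra hwn
      exact hnc ⟨w, hwn, hwadju, hwadjv⟩
    exact ⟨hwS, hwadju.symm, hwadjv.symm⟩
  have bad_unique : ∀ w1 w2, w1 ≠ w2 → w2 ≠ u → w2 ≠ v → Bad w1 → Bad w2 → False := by
    intro w1 w2 hne h2u h2v hb1 hb2
    rcases hb1 with ⟨d1, h⟩ | ⟨d1, h⟩ <;> rcases hb2 with ⟨d2, h'⟩ | ⟨d2, h'⟩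
    · exact hne (d1.trans d2.symm)
    · rcases h with e | e
      · exact h2u (d2.trans e.symm)
      · exact h2v (d2.trans e.symm)
    · rcases h with e | e
      · exact h2u (d2.trans e.symm)
      · exact h2v (d2.trans e.symm)
    · exact hne (d1.trans d2.symm)
  -- from Bad w we get w ∈ {p,q}
  have badpq : ∀ w, Bad w → w = p ∨ w = q := by
    rintro w (⟨e, _⟩ | ⟨e, _⟩); exacts [Or.inl e, Or.inr e]
  have finish : ∀ c d : V, c ∈ P → d ∈ P → c ≠ u → c ≠ v → d ≠ u → d ≠ v →
      ¬ Bad c → ¬ Bad d → G.Adj c d →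
      ∃ a b : V, a ∈ S ∧ b ∈ S ∧ G.Adj a b ∧ s(u,v) ∈ BOf G S a b := by
    intro c d hcP hdP hcu hcv hdu hdv hnbc hnbd hcd
    obtain ⟨hcS, huc, hvc⟩ := good c hcP hcu hcv hnbc
    obtain ⟨hdS, hud, hvd⟩ := good d hdP hdu hdv hnbd
    refine ⟨c, d, hcS, hdS, hcd, ⟨⟨?_, hno⟩, ?_⟩⟩
    · rw [mem_edgesWithin]; exact ⟨huv, huSc, hvSc⟩
    · intro w hw
      rcases Sym2.mem_iff.mp hw with rfl | rfl
      exacts [⟨huc, hud⟩, ⟨hvc, hvd⟩]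
  -- if two vertices are both non-Bad and the pair {c,d} is not the missing pair
  have adj_of : ∀ c d : V, c ∈ P → d ∈ P → c ≠ d →
      ¬((c = p ∧ d = q) ∨ (c = q ∧ d = p)) → G.Adj c d := by
    intro c d hcP hdP hne hn
    by_contra hna
    exact hn (hmiss c hcP d hdP hne hna)
  by_cases bx : Bad x
  · -- y, z are good; y ~ z since the missing pair involves x
    have hnby : ¬ Bad y := fun b => bad_unique x y hxy hyuv.1 hyuv.2 bx b
    have hnbz : ¬ Bad z := fun b => bad_unique x z hxz hzuv.1 hzuv.2 bx b
    have hyzadj : G.Adj y z := by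
      refine adj_of y z hyP hzP hyz ?_
      rcases badpq x bx with rfl | rfl
      · rintro (⟨rfl, _⟩ | ⟨_, rfl⟩); exacts [hxy rfl, hxz rfl]
      · rintro (⟨_, rfl⟩ | ⟨rfl, _⟩); exacts [hxz rfl, hxy rfl]
    exact finish y z hyP hzP hyuv.1 hyuv.2 hzuv.1 hzuv.2 hnby hnbz hyzadj
  · by_cases by' : Bad y
    · have hnbz : ¬ Bad z := fun b => bad_unique y z hyz hzuv.1 hzuv.2 by' b
      have hxzadj : G.Adj x z := by
        refine adj_of x z hxP hzP hxz ?_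
        rcases badpq y by' with rfl | rfl
        · rintro (⟨rfl, _⟩ | ⟨_, rfl⟩); exacts [hxy.symm rfl, hyz rfl]
        · rintro (⟨_, rfl⟩ | ⟨rfl, _⟩); exacts [hyz rfl, hxy.symm rfl]
      exact finish x z hxP hzP hxuv.1 hxuv.2 hzuv.1 hzuv.2 bx hnbz hxzadj
    · by_cases hxyadj : G.Adj x y
      · exact finish x y hxP hyP hxuv.1 hxuv.2 hyuv.1 hyuv.2 bx by' hxyadj
      · have hm := hmiss x hxP y hyP hxy hxyadj
        have hxzadj : G.Adj x z := by
          refine adj_of x z hxP hzP hxz ?_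
          rcases hm with ⟨rfl, rfl⟩ | ⟨rfl, rfl⟩
          · rintro (⟨_, rfl⟩ | ⟨rfl, _⟩); exacts [hyz rfl, hxy rfl]
          · rintro (⟨rfl, _⟩ | ⟨_, rfl⟩); exacts [hxy rfl, hyz rfl]
        have hnbz : ¬ Bad z := by
          intro bz
          rcases badpq z bz with e | e <;> rcases hm with ⟨e1, e2⟩ | ⟨e1, e2⟩
          · exact hxz (e1.trans e.symm)
          · exact hyz (e2.trans e.symm)
          · exact hyz (e2.trans e.symm)
          · exact hxz (e1.trans e.symm)
        exact finish x z hxP hzP hxuv.1 hxuv.2 hzuv.1 hzuv.2 bx hnbz hxzadj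

/-- Claim 2 (one inclusion): if `B_{ab}` and `B_{a'b'}` intersect, `B_{ab} ⊆ B_{a'b'}`. -/
lemma BOf_subset (h2 : H2 G S) {a b a' b' : V}
    (hab : G.Adj a b) (ha'S : a' ∈ S) (hb'S : b' ∈ S)
    {f : Sym2 V} (hf1 : f ∈ BOf G S a b) (hf2 : f ∈ BOf G S a' b') :
    BOf G S a b ⊆ BOf G S a' b' := by
  induction f using Sym2.ind with
  | _ u v =>
    obtain ⟨⟨hew, hno⟩, hadj⟩ := hf1
    obtain ⟨_, hadj'⟩ := hf2
    rw [mem_edgesWithin] at hew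
    obtain ⟨huv, huSc, hvSc⟩ := hew
    have hu := hadj u (Sym2.mem_mk_left u v)
    have hv := hadj v (Sym2.mem_mk_right u v)
    have hu' := hadj' u (Sym2.mem_mk_left u v)
    have hv' := hadj' v (Sym2.mem_mk_right u v)
    have hnc := no_common (u := u) (v := v) hno
    intro g hg
    induction g using Sym2.ind with
    | _ x y =>
      obtain ⟨⟨hew', hno'⟩, hadj2⟩ := hg
      have hew'' := hew'
      rw [mem_edgesWithin] at hew''
      refine ⟨⟨hew', hno'⟩, ?_⟩
      intro w hw
      have hwS : w ∉ S := by
        rcases Sym2.mem_iff.mp hw with rfl | rfl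
        exacts [hew''.2.1, hew''.2.2]
      have hwa := (hadj2 w hw).1
      have hwb := (hadj2 w hw).2
      constructor
      · exact adj_key h2 huSc hvSc hwS ha'S huv hnc hab hu.1 hu.2 hv.1 hv.2
          hu'.1 hv'.1 hwa hwb
      · exact adj_key h2 huSc hvSc hwS hb'S huv hnc hab hu.1 hu.2 hv.1 hv.2
          hu'.2 hv'.2 hwa hwb

end Statement13Aux


/-- Under (H1) and (H2), the nonempty sets among
`{B_e : e ∈ E(G[S])}` partition `B`: every edge of `B` lies in some `B_e`, and any
two such sets are equal or disjoint. -/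
theorem B_partition {V : Type*} [Fintype V] (G : SimpleGraph V)
    (S : Set V) (h1 : H1 G S) (h2 : H2 G S) :
    (∀ f ∈ BSet G S, ∃ a b : V, a ∈ S ∧ b ∈ S ∧ G.Adj a b ∧ f ∈ BOf G S a b) ∧
    (∀ a b a' b' : V, a ∈ S → b ∈ S → G.Adj a b → a' ∈ S → b' ∈ S → G.Adj a' b' →
      BOf G S a b = BOf G S a' b' ∨ Disjoint (BOf G S a b) (BOf G S a' b')) := by
  constructor
  · intro f hf
    induction f using Sym2.ind with
    | _ u v => exact claim1 h1 h2 hf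
  · intro a b a' b' haS hbS hab ha'S hb'S ha'b'
    by_cases hdis : Disjoint (BOf G S a b) (BOf G S a' b')
    · exact Or.inr hdis
    · left
      rw [Set.not_disjoint_iff] at hdis
      obtain ⟨f, hf1, hf2⟩ := hdis
      exact Set.Subset.antisymm (BOf_subset h2 hab ha'S hb'S hf1 hf2)
        (BOf_subset h2 ha'b' haS hbS hf2 hf1)


end PrisonFreePaper
end
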